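/- Let p ≥ 3 be an integer. Then for all integers m, ℓ with 1 ≤ m ≤ p and 1 ≤ ℓ ≤ m, and for every z ∈ ℂ satisfying |∑_{k=0}^{p} z^k/k!| ≤ 1, one has (m^{p−1} / ((p−m)! · (m−1)!)) · |1 + z/m|^{ℓ−1} < 9.34^p / (5.2·π·√(p−1)). -/

import Mathlib

open Finset

lemma euler_key_identity {K : Type*} [Field K] [CharZero K] (p : ℕ) (z : K) :
    ((p : K) - z) * ∑ k ∈ range (p + 1), z ^ k / (Nat.factorial k : K)
      = (∑ k ∈ range (p + 1), ((p : K) - (k : K)) * z ^ k / (Nat.factorial k : K))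
        - z ^ (p + 1) / (Nat.factorial p : K) := by
  have h1 : ∑ k ∈ range (p + 1), (k : K) * z ^ k / (Nat.factorial k : K)
      = ∑ j ∈ range p, z ^ (j + 1) / (Nat.factorial j : K) := by
    rw [Finset.sum_range_succ']
    simp only [Nat.cast_zero, zero_mul, pow_zero, Nat.factorial_zero, Nat.cast_one, zero_div,
      add_zero]
    refine Finset.sum_congr rfl fun i _ => ?_
    have hfac : (Nat.factorial (i + 1) : K) = ((i : K) + 1) * (Nat.factorial i : K) := by
      rw [Nat.factorial_succ]; push_cast; ring
    have hne : ((i : K) + 1) ≠ 0 := by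
      have : ((i + 1 : ℕ) : K) ≠ 0 := Nat.cast_ne_zero.mpr (Nat.succ_ne_zero i)
      push_cast at this; exact this
    push_cast
    rw [hfac, mul_comm ((i : K) + 1) (Nat.factorial i : K), ← div_div, mul_div_assoc,
      mul_div_assoc]
    rw [mul_comm, div_mul_cancel₀ _ hne]
  have h2 : z * ∑ k ∈ range (p + 1), z ^ k / (Nat.factorial k : K)
      = (∑ j ∈ range p, z ^ (j + 1) / (Nat.factorial j : K)) + z ^ (p + 1) / (Nat.factorial p : K) := by
    rw [Finset.mul_sum, ← Finset.sum_range_succ]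
    refine Finset.sum_congr rfl fun k _ => ?_
    rw [pow_succ]; ring
  have h3 : ∑ k ∈ range (p + 1), ((p : K) - (k : K)) * z ^ k / (Nat.factorial k : K)
      = (∑ k ∈ range (p + 1), (p : K) * z ^ k / (Nat.factorial k : K))
        - ∑ k ∈ range (p + 1), (k : K) * z ^ k / (Nat.factorial k : K) := by
    rw [← Finset.sum_sub_distrib]
    refine Finset.sum_congr rfl fun k _ => ?_
    ring
  rw [sub_mul, h2, h3, h1]
  simp only [Finset.mul_sum, mul_div_assoc]
  ring

lemma real_sum_identity (p : ℕ) :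
    ∑ k ∈ range (p + 1), ((p : ℝ) - (k : ℝ)) * (p : ℝ) ^ k / (Nat.factorial k : ℝ)
      = (p : ℝ) ^ (p + 1) / (Nat.factorial p : ℝ) := by
  have := euler_key_identity (K := ℝ) p (p : ℝ)
  rw [sub_self, zero_mul] at this
  linarith [this]


lemma two_pow_factorial_le (p : ℕ) (hp : 1 ≤ p) :
    (2 : ℝ) ^ (p - 1) * (Nat.factorial p : ℝ) ≤ (p : ℝ) ^ p := by
  induction p, hp using Nat.le_induction with
  | base => norm_num
  | succ n hn ih =>
    have hn0 : (0 : ℝ) < n := by exact_mod_cast hn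
    have hber : (2 : ℝ) ≤ (1 + 1 / (n : ℝ)) ^ n := by
      have h := one_add_mul_le_pow (a := (1 / (n : ℝ))) (le_trans (by norm_num : (-2:ℝ) ≤ 0) (by positivity)) n
      have : (n : ℝ) * (1 / (n : ℝ)) = 1 := by field_simp
      nlinarith [h]
    have hkey : 2 * (n : ℝ) ^ n ≤ ((n : ℝ) + 1) ^ n := by
      have : ((n : ℝ) + 1) ^ n = (1 + 1 / (n : ℝ)) ^ n * (n : ℝ) ^ n := by
        rw [← mul_pow]; congr 1; field_simp
      rw [this]
      nlinarith [pow_pos hn0 n, hber]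
    have hfac : (Nat.factorial (n + 1) : ℝ) = ((n : ℝ) + 1) * (Nat.factorial n : ℝ) := by
      rw [Nat.factorial_succ]; push_cast; ring
    have hs : n + 1 - 1 = n := by omega
    rw [hs, hfac]
    have h2 : (2 : ℝ) ^ n = 2 * 2 ^ (n - 1) := by
      rw [← pow_succ']
      congr 1
      omega
    have hcast : ((n + 1 : ℕ) : ℝ) = (n : ℝ) + 1 := by push_cast; ring
    rw [hcast]
    have hpow : ((n : ℝ) + 1) ^ (n + 1) = ((n : ℝ) + 1) * ((n : ℝ) + 1) ^ n := by ring
    rw [hpow, h2]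
    have hfn : (0 : ℝ) < (Nat.factorial n : ℝ) := by positivity
    calc 2 * 2 ^ (n - 1) * (((n : ℝ) + 1) * (Nat.factorial n : ℝ))
        = ((n : ℝ) + 1) * (2 * (2 ^ (n - 1) * (Nat.factorial n : ℝ))) := by ring
      _ ≤ ((n : ℝ) + 1) * (2 * (n : ℝ) ^ n) := by
          have := mul_le_mul_of_nonneg_left ih (by norm_num : (0:ℝ) ≤ 2)
          exact mul_le_mul_of_nonneg_left this (by positivity)
      _ ≤ ((n : ℝ) + 1) * ((n : ℝ) + 1) ^ n := by
          exact mul_le_mul_of_nonneg_left hkey (by positivity)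

lemma abs_z_le (p : ℕ) (hp : 3 ≤ p) (z : ℂ)
    (hz : ‖∑ k ∈ range (p + 1), z ^ k / (Nat.factorial k : ℂ)‖ ≤ 1) :
    ‖z‖ ≤ 6 * (p : ℝ) / 5 := by
  by_contra hcon
  push_neg at hcon
  set r := ‖z‖ with hrdef
  have hP0 : (0 : ℝ) < (p : ℝ) := by positivity
  have hrP : (p : ℝ) < r := by nlinarith
  have hr0 : (0 : ℝ) < r := lt_trans hP0 hrP
  have hfp : (0 : ℝ) < (Nat.factorial p : ℝ) := by positivity
  -- upper bound
  have hub : ‖((p : ℂ) - z) * ∑ k ∈ range (p + 1), z ^ k / (Nat.factorial k : ℂ)‖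
      ≤ (p : ℝ) + r := by
    rw [norm_mul]
    have h1 : ‖(p : ℂ) - z‖ ≤ (p : ℝ) + r := by
      calc ‖(p : ℂ) - z‖ ≤ ‖(p : ℂ)‖ + ‖-z‖ := by
            simpa [sub_eq_add_neg] using norm_add_le (p : ℂ) (-z)
        _ = (p : ℝ) + r := by rw [norm_neg, Complex.norm_natCast]
    calc ‖(p : ℂ) - z‖ * ‖∑ k ∈ range (p + 1), z ^ k / (Nat.factorial k : ℂ)‖
        ≤ ((p : ℝ) + r) * 1 := mul_le_mul h1 hz (norm_nonneg _) (by positivity)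
      _ = (p : ℝ) + r := mul_one _
  rw [euler_key_identity] at hub
  -- bound on the coefficient sum
  have hone : (1 : ℝ) ≤ r / (p : ℝ) := by rw [le_div_iff₀ hP0]; nlinarith
  have hSig : ‖∑ k ∈ range (p + 1), ((p : ℂ) - (k : ℂ)) * z ^ k / (Nat.factorial k : ℂ)‖
      ≤ (r / (p : ℝ)) ^ (p - 1) * ((p : ℝ) ^ (p + 1) / (Nat.factorial p : ℝ)) := by
    calc ‖∑ k ∈ range (p + 1), ((p : ℂ) - (k : ℂ)) * z ^ k / (Nat.factorial k : ℂ)‖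
        ≤ ∑ k ∈ range (p + 1), ‖((p : ℂ) - (k : ℂ)) * z ^ k / (Nat.factorial k : ℂ)‖ :=
          norm_sum_le _ _
      _ = ∑ k ∈ range (p + 1), ((p : ℝ) - (k : ℝ)) * r ^ k / (Nat.factorial k : ℝ) := by
          refine Finset.sum_congr rfl fun k hk => ?_
          have hkp : k ≤ p := by simpa [Nat.lt_succ_iff] using hk
          rw [norm_div, norm_mul, norm_pow]
          have h2 : ‖(p : ℂ) - (k : ℂ)‖ = (p : ℝ) - (k : ℝ) := by
            rw [show ((p : ℂ) - (k : ℂ)) = (((p : ℝ) - (k : ℝ) : ℝ) : ℂ) by push_cast; ring,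
              Complex.norm_real, Real.norm_eq_abs, abs_of_nonneg]
            have : (k : ℝ) ≤ (p : ℝ) := by exact_mod_cast hkp
            linarith
          rw [h2, Complex.norm_natCast]
      _ ≤ ∑ k ∈ range (p + 1), (r / (p : ℝ)) ^ (p - 1) * (((p : ℝ) - (k : ℝ)) * (p : ℝ) ^ k / (Nat.factorial k : ℝ)) := by
          refine Finset.sum_le_sum fun k hk => ?_
          have hkp : k ≤ p := by simpa [Nat.lt_succ_iff] using hk
          have hkR : (k : ℝ) ≤ (p : ℝ) := by exact_mod_cast hkp
          rcases eq_or_lt_of_le hkp with heq | hlt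
          · subst heq; simp
          · have hk1 : k ≤ p - 1 := by omega
            have hcoef : (0 : ℝ) ≤ ((p : ℝ) - (k : ℝ)) / (Nat.factorial k : ℝ) := by
              have : (0:ℝ) ≤ (p : ℝ) - (k : ℝ) := by linarith
              positivity
            have hrk : r ^ k ≤ (r / (p : ℝ)) ^ (p - 1) * (p : ℝ) ^ k := by
              have h3 : r ^ k = (r / (p : ℝ)) ^ k * (p : ℝ) ^ k := by
                rw [← mul_pow, div_mul_cancel₀ _ hP0.ne']
              rw [h3]
              exact mul_le_mul_of_nonneg_right (pow_le_pow_right₀ hone hk1) (by positivity)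
            calc ((p : ℝ) - (k : ℝ)) * r ^ k / (Nat.factorial k : ℝ)
                = ((p : ℝ) - (k : ℝ)) / (Nat.factorial k : ℝ) * r ^ k := by ring
              _ ≤ ((p : ℝ) - (k : ℝ)) / (Nat.factorial k : ℝ)
                    * ((r / (p : ℝ)) ^ (p - 1) * (p : ℝ) ^ k) :=
                  mul_le_mul_of_nonneg_left hrk hcoef
              _ = (r / (p : ℝ)) ^ (p - 1) * (((p : ℝ) - (k : ℝ)) * (p : ℝ) ^ k / (Nat.factorial k : ℝ)) := by
                  ring
      _ = (r / (p : ℝ)) ^ (p - 1) * ((p : ℝ) ^ (p + 1) / (Nat.factorial p : ℝ)) := by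
          rw [← Finset.mul_sum, real_sum_identity]
  -- lower bound on the whole expression
  have habsW : ‖z ^ (p + 1) / (Nat.factorial p : ℂ)‖ = r ^ (p + 1) / (Nat.factorial p : ℝ) := by
    rw [norm_div, norm_pow, Complex.norm_natCast]
  have hlow : r ^ (p + 1) / (Nat.factorial p : ℝ)
      - (r / (p : ℝ)) ^ (p - 1) * ((p : ℝ) ^ (p + 1) / (Nat.factorial p : ℝ)) ≤ (p : ℝ) + r := by
    have h4 := norm_sub_norm_le (z ^ (p + 1) / (Nat.factorial p : ℂ))
      (∑ k ∈ range (p + 1), ((p : ℂ) - (k : ℂ)) * z ^ k / (Nat.factorial k : ℂ))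
    rw [habsW] at h4
    have h5 : ‖z ^ (p + 1) / (Nat.factorial p : ℂ)
        - ∑ k ∈ range (p + 1), ((p : ℂ) - (k : ℂ)) * z ^ k / (Nat.factorial k : ℂ)‖
        = ‖(∑ k ∈ range (p + 1), ((p : ℂ) - (k : ℂ)) * z ^ k / (Nat.factorial k : ℂ))
          - z ^ (p + 1) / (Nat.factorial p : ℂ)‖ := by
      rw [norm_sub_rev]
    linarith [hub, hSig, h4, h5 ▸ h4]
  -- arithmetic contradiction
  have hexp : r ^ (p + 1) = (r / (p : ℝ)) ^ (p - 1) * (p : ℝ) ^ (p - 1) * r ^ 2 := by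
    rw [← mul_pow, div_mul_cancel₀ _ hP0.ne', ← pow_add]
    congr 1
    omega
  have hexp2 : (p : ℝ) ^ (p + 1) = (p : ℝ) ^ (p - 1) * (p : ℝ) ^ 2 := by
    rw [← pow_add]; congr 1; omega
  have hdiff : r ^ (p + 1) / (Nat.factorial p : ℝ)
      - (r / (p : ℝ)) ^ (p - 1) * ((p : ℝ) ^ (p + 1) / (Nat.factorial p : ℝ))
      = (r / (p : ℝ)) ^ (p - 1) * (p : ℝ) ^ (p - 1) * (r - (p : ℝ)) * (r + (p : ℝ)) / (Nat.factorial p : ℝ) := by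
    rw [hexp, hexp2]
    field_simp
    ring
  rw [hdiff] at hlow
  -- now derive contradiction
  have hrp0 : (0 : ℝ) < r + (p : ℝ) := by positivity
  have h65 : (6 : ℝ)/5 ≤ r / (p : ℝ) := by rw [le_div_iff₀ hP0]; nlinarith
  have h15 : (p : ℝ)/5 ≤ r - (p : ℝ) := by nlinarith
  have hA : ((6 : ℝ)/5) ^ (p - 1) * (p : ℝ) ^ (p - 1) * ((p : ℝ)/5) * (r + (p : ℝ))
      ≤ (r / (p : ℝ)) ^ (p - 1) * (p : ℝ) ^ (p - 1) * (r - (p : ℝ)) * (r + (p : ℝ)) := by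
    refine mul_le_mul_of_nonneg_right ?_ (le_of_lt hrp0)
    refine mul_le_mul ?_ h15 (by positivity) (by positivity)
    exact mul_le_mul_of_nonneg_right (pow_le_pow_left₀ (by norm_num) h65 _) (by positivity)
  have hB : ((12 : ℝ)/5) ^ (p - 1) * (Nat.factorial p : ℝ)
      ≤ ((6 : ℝ)/5) ^ (p - 1) * (p : ℝ) ^ (p - 1) * (p : ℝ) := by
    have h1 : ((12 : ℝ)/5) ^ (p - 1) = ((6:ℝ)/5) ^ (p-1) * 2 ^ (p-1) := by
      rw [← mul_pow]; norm_num
    have h2 : (p : ℝ) ^ (p - 1) * (p : ℝ) = (p : ℝ) ^ p := by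
      rw [← pow_succ]; congr 1; omega
    rw [h1, mul_assoc, mul_assoc, h2]
    exact mul_le_mul_of_nonneg_left (two_pow_factorial_le p (by omega)) (by positivity)
  have hC : ((12 : ℝ)/5) ^ 2 ≤ ((12 : ℝ)/5) ^ (p - 1) :=
    pow_le_pow_right₀ (by norm_num) (by omega)
  have e1 : ((12:ℝ)/5) ^ (p - 1) * (r + (p : ℝ)) / 5
      ≤ ((6 : ℝ)/5) ^ (p - 1) * (p : ℝ) ^ (p - 1) * ((p : ℝ)/5) * (r + (p : ℝ)) / (Nat.factorial p : ℝ) := by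
    have h := mul_le_mul_of_nonneg_right hB
      (show (0:ℝ) ≤ (r + (p : ℝ))/(5 * (Nat.factorial p : ℝ)) by positivity)
    have eL : ((12:ℝ)/5) ^ (p - 1) * (Nat.factorial p : ℝ) * ((r + (p : ℝ))/(5 * (Nat.factorial p : ℝ)))
        = ((12:ℝ)/5) ^ (p - 1) * (r + (p : ℝ)) / 5 := by
      field_simp
    have eR : ((6 : ℝ)/5) ^ (p - 1) * (p : ℝ) ^ (p - 1) * (p : ℝ) * ((r + (p : ℝ))/(5 * (Nat.factorial p : ℝ)))
        = ((6 : ℝ)/5) ^ (p - 1) * (p : ℝ) ^ (p - 1) * ((p : ℝ)/5) * (r + (p : ℝ)) / (Nat.factorial p : ℝ) := by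
      field_simp
    rw [eL, eR] at h
    exact h
  have e2 : ((6 : ℝ)/5) ^ (p - 1) * (p : ℝ) ^ (p - 1) * ((p : ℝ)/5) * (r + (p : ℝ)) / (Nat.factorial p : ℝ)
      ≤ (r / (p : ℝ)) ^ (p - 1) * (p : ℝ) ^ (p - 1) * (r - (p : ℝ)) * (r + (p : ℝ)) / (Nat.factorial p : ℝ) :=
    (div_le_div_iff_of_pos_right hfp).mpr hA
  have e3 : (144:ℝ)/25 * (r + (p : ℝ)) / 5 ≤ ((12:ℝ)/5) ^ (p - 1) * (r + (p : ℝ)) / 5 := by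
    have h := mul_le_mul_of_nonneg_right hC (show (0:ℝ) ≤ (r + (p : ℝ))/5 by positivity)
    calc (144:ℝ)/25 * (r + (p : ℝ)) / 5 = ((12:ℝ)/5)^2 * ((r + (p : ℝ))/5) := by ring
      _ ≤ ((12:ℝ)/5) ^ (p - 1) * ((r + (p : ℝ))/5) := h
      _ = ((12:ℝ)/5) ^ (p - 1) * (r + (p : ℝ)) / 5 := by ring
  linarith [hlow, e1, e2, e3]


lemma rhs_helper (p : ℕ) (c q : ℝ) (hp1 : (1:ℝ) ≤ (p:ℝ) - 1) (hq0 : 0 < q)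
    (hsq : Real.sqrt ((p:ℝ) - 1) ≤ q) (hc : 0 ≤ c)
    (h : c * (5.2 * 3.15 * q) < 9.34 ^ p) :
    c < 9.34 ^ p / (5.2 * Real.pi * Real.sqrt ((p:ℝ) - 1)) := by
  have hs0 : 0 < Real.sqrt ((p:ℝ) - 1) := Real.sqrt_pos.mpr (by linarith)
  have hpi := Real.pi_lt_d2
  have hpi0 := Real.pi_pos
  rw [lt_div_iff₀ (by positivity)]
  calc c * (5.2 * Real.pi * Real.sqrt ((p:ℝ)-1)) ≤ c * (5.2 * 3.15 * q) := by
        refine mul_le_mul_of_nonneg_left ?_ hc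
        nlinarith [hs0.le, hsq, mul_le_mul hpi.le hsq hs0.le (by norm_num : (0:ℝ) ≤ 3.15)]
    _ < 9.34 ^ p := h

lemma choose_le_pow16 (p m : ℕ) (hm1 : 1 ≤ m) (hmp : m ≤ p) :
    ((Nat.choose (p-1) (m-1)) : ℝ) * ((11:ℝ)/5) ^ (m-1) ≤ ((16:ℝ)/5) ^ (p-1) := by
  have h : ((11:ℝ)/5 + 1) ^ (p-1)
      = ∑ k ∈ range ((p-1)+1), ((11:ℝ)/5)^k * 1^((p-1)-k) * ((Nat.choose (p-1) k) : ℝ) :=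
    add_pow _ _ _
  have hmem : m - 1 ∈ range ((p-1)+1) := mem_range.mpr (by omega)
  have hs := Finset.single_le_sum
    (f := fun k => ((11:ℝ)/5)^k * 1^((p-1)-k) * ((Nat.choose (p-1) k) : ℝ))
    (fun i _ => by positivity) hmem
  calc ((Nat.choose (p-1) (m-1)) : ℝ) * ((11:ℝ)/5) ^ (m-1)
      = ((11:ℝ)/5)^(m-1) * 1^((p-1)-(m-1)) * ((Nat.choose (p-1) (m-1)) : ℝ) := by
        rw [one_pow]; ring
    _ ≤ ((11:ℝ)/5 + 1) ^ (p-1) := by rw [h]; exact hs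
    _ = ((16:ℝ)/5) ^ (p-1) := by norm_num

lemma F_lt (p : ℕ) (hp : 10 ≤ p) :
    ((16:ℝ)/5) ^ (p-1) * (p:ℝ) ^ (p-1) / (Nat.factorial (p-1) : ℝ)
      < 9.34 ^ p / (5.2 * Real.pi * Real.sqrt ((p:ℝ) - 1)) := by
  induction p, hp using Nat.le_induction with
  | base =>
      apply rhs_helper _ _ 3 (by norm_num) (by norm_num)
        (Real.sqrt_le_iff.mpr ⟨by norm_num, by norm_num⟩) (by positivity)
      norm_num [Nat.factorial]
  | succ n hn ih =>
      have hN10 : (10:ℝ) ≤ (n:ℝ) := by exact_mod_cast hn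
      have hN0 : (0:ℝ) < (n:ℝ) := by linarith
      have hsN : (0:ℝ) < Real.sqrt (n:ℝ) := Real.sqrt_pos.mpr hN0
      have hsN1 : (0:ℝ) < Real.sqrt ((n:ℝ) - 1) := Real.sqrt_pos.mpr (by linarith)
      have hpi0 := Real.pi_pos
      set c : ℝ := (16/5) * (((n:ℝ)+1)/(n:ℝ))^n with hcdef
      have hc0 : 0 < c := by
        have : (0:ℝ) < ((n:ℝ)+1)/(n:ℝ) := by positivity
        positivity
      have hcb : c ≤ 8.6986 := by
        have h1 : ((n:ℝ)+1)/(n:ℝ) = 1 + 1/(n:ℝ) := by field_simp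
        have h2 : (1 : ℝ) + 1/(n:ℝ) ≤ Real.exp (1/(n:ℝ)) := by
          have := Real.add_one_le_exp (1/(n:ℝ))
          linarith
        have h3 : (((n:ℝ)+1)/(n:ℝ))^n ≤ Real.exp (1/(n:ℝ)) ^ n := by
          rw [h1]
          exact pow_le_pow_left₀ (by positivity) h2 n
        have h4 : Real.exp (1/(n:ℝ)) ^ n = Real.exp 1 := by
          rw [← Real.exp_nat_mul]
          congr 1
          field_simp
        have h5 := Real.exp_one_lt_d9
        rw [hcdef]
        nlinarith [h3, h4 ▸ h3]
      -- the sqrt comparison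
      have hkey : c * Real.sqrt (n:ℝ) ≤ 9.34 * Real.sqrt ((n:ℝ) - 1) := by
        have h1 : (8.6986:ℝ)^2 * (n:ℝ) ≤ 9.34^2*((n:ℝ)-1) := by nlinarith
        have h2 : (8.6986:ℝ) * Real.sqrt (n:ℝ) ≤ 9.34 * Real.sqrt ((n:ℝ)-1) := by
          calc (8.6986:ℝ) * Real.sqrt (n:ℝ)
              = Real.sqrt ((8.6986:ℝ)^2) * Real.sqrt (n:ℝ) := by
                rw [Real.sqrt_sq (by norm_num)]
            _ = Real.sqrt ((8.6986:ℝ)^2 * (n:ℝ)) := (Real.sqrt_mul (by positivity) _).symm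
            _ ≤ Real.sqrt (9.34^2*((n:ℝ)-1)) := Real.sqrt_le_sqrt h1
            _ = Real.sqrt ((9.34:ℝ)^2) * Real.sqrt ((n:ℝ)-1) := Real.sqrt_mul (by positivity) _
            _ = 9.34 * Real.sqrt ((n:ℝ)-1) := by rw [Real.sqrt_sq (by norm_num)]
        calc c * Real.sqrt (n:ℝ) ≤ (8.6986:ℝ) * Real.sqrt (n:ℝ) :=
              mul_le_mul_of_nonneg_right hcb hsN.le
          _ ≤ 9.34 * Real.sqrt ((n:ℝ)-1) := h2
      -- index simplifications
      have hidx : n + 1 - 1 = n := by omega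
      have hcast : ((n+1:ℕ):ℝ) = (n:ℝ) + 1 := by push_cast; ring
      rw [hidx, hcast, show (n:ℝ) + 1 - 1 = (n:ℝ) from by ring]
      have hfac : (Nat.factorial n : ℝ) = (n:ℝ) * (Nat.factorial (n-1) : ℝ) := by
        rw [← Nat.mul_factorial_pred (by omega : n ≠ 0)]
        push_cast
        ring
      have heq : ((16:ℝ)/5) ^ n * ((n:ℝ)+1) ^ n / (Nat.factorial n : ℝ)
          = (((16:ℝ)/5) ^ (n-1) * (n:ℝ) ^ (n-1) / (Nat.factorial (n-1) : ℝ)) * c := by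
        have e1 : ((16:ℝ)/5) ^ n = ((16:ℝ)/5) ^ (n-1) * (16/5) := by
          rw [← pow_succ]; congr 1; omega
        have e2 : (n:ℝ) ^ n = (n:ℝ) ^ (n-1) * (n:ℝ) := by
          rw [← pow_succ]; congr 1; omega
        have e3 : (((n:ℝ)+1)/(n:ℝ))^n = ((n:ℝ)+1)^n / (n:ℝ)^n := div_pow _ _ n
        rw [hcdef, e1, e3, hfac, e2]
        have hfn1 : (0:ℝ) < (Nat.factorial (n-1) : ℝ) := by positivity
        field_simp
      rw [heq]
      have hstep : (9.34 ^ n / (5.2 * Real.pi * Real.sqrt ((n:ℝ) - 1))) * c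
          ≤ 9.34 ^ (n+1) / (5.2 * Real.pi * Real.sqrt (n:ℝ)) := by
        rw [div_mul_eq_mul_div, div_le_div_iff₀ (by positivity) (by positivity)]
        calc 9.34 ^ n * c * (5.2 * Real.pi * Real.sqrt (n:ℝ))
            = (c * Real.sqrt (n:ℝ)) * (9.34 ^ n * (5.2 * Real.pi)) := by ring
          _ ≤ (9.34 * Real.sqrt ((n:ℝ)-1)) * (9.34 ^ n * (5.2 * Real.pi)) := by
              refine mul_le_mul_of_nonneg_right hkey (by positivity)
          _ = 9.34 ^ (n+1) * (5.2 * Real.pi * Real.sqrt ((n:ℝ)-1)) := by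
              rw [pow_succ]; ring
      calc (((16:ℝ)/5) ^ (n-1) * (n:ℝ) ^ (n-1) / (Nat.factorial (n-1) : ℝ)) * c
          < (9.34 ^ n / (5.2 * Real.pi * Real.sqrt ((n:ℝ) - 1))) * c :=
            mul_lt_mul_of_pos_right ih hc0
        _ ≤ 9.34 ^ (n+1) / (5.2 * Real.pi * Real.sqrt (n:ℝ)) := hstep


/-- **Theorem 4.10.** For `p ≥ 3`, the internal stability polynomials of the
order-`p` explicit Euler extrapolation method satisfy, on the absolute stability
region `S_p = {z : |∑_{k=0}^p z^k/k!| ≤ 1}`,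
`|Q^{EE}_{p,m,ℓ}(z)| = (m^{p−1}/((p−m)!(m−1)!))·|1 + z/m|^{ℓ−1} < 9.34^p/(5.2·π·√(p−1))`. -/
theorem euler_extrapolation_amplification_bound
    (p : ℕ) (hp : 3 ≤ p) (m ℓ : ℕ) (hm1 : 1 ≤ m) (hmp : m ≤ p)
    (hℓ1 : 1 ≤ ℓ) (hℓm : ℓ ≤ m) (z : ℂ)
    (hz : ‖∑ k ∈ Finset.range (p + 1), z ^ k / (Nat.factorial k : ℂ)‖ ≤ 1) :
    (m : ℝ) ^ (p - 1) / ((Nat.factorial (p - m) : ℝ) * (Nat.factorial (m - 1) : ℝ)) *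
        ‖1 + z / m‖ ^ (ℓ - 1) <
      9.34 ^ p / (5.2 * Real.pi * Real.sqrt ((p : ℝ) - 1)) := by
  have hm0 : (0:ℝ) < (m:ℝ) := by exact_mod_cast hm1
  have hP0 : (0:ℝ) < (p:ℝ) := by exact_mod_cast (show 0 < p by omega)
  have hr := abs_z_le p hp z hz
  have hb1 : (1:ℝ) ≤ 1 + 6*(p:ℝ)/(5*(m:ℝ)) := by
    have : (0:ℝ) ≤ 6*(p:ℝ)/(5*(m:ℝ)) := by positivity
    linarith
  have habs : ‖1 + z/(m:ℂ)‖ ≤ 1 + 6*(p:ℝ)/(5*(m:ℝ)) := by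
    calc ‖1 + z/(m:ℂ)‖ ≤ ‖(1:ℂ)‖ + ‖z/(m:ℂ)‖ :=
          norm_add_le _ _
      _ = 1 + ‖z‖/(m:ℝ) := by rw [norm_one, norm_div, Complex.norm_natCast]
      _ ≤ 1 + 6*(p:ℝ)/(5*(m:ℝ)) := by
          have h1 : ‖z‖/(m:ℝ) ≤ (6*(p:ℝ)/5)/(m:ℝ) := by gcongr
          have h2 : (6*(p:ℝ)/5)/(m:ℝ) = 6*(p:ℝ)/(5*(m:ℝ)) := by ring
          linarith [h2 ▸ h1]
  have hpow : ‖1 + z/(m:ℂ)‖ ^ (ℓ-1) ≤ (1 + 6*(p:ℝ)/(5*(m:ℝ))) ^ (m-1) :=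
    le_trans (pow_le_pow_left₀ (norm_nonneg _) habs _) (pow_le_pow_right₀ hb1 (by omega))
  have hA : (0:ℝ) ≤ (m:ℝ)^(p-1) / ((Nat.factorial (p-m):ℝ) * (Nat.factorial (m-1):ℝ)) := by
    positivity
  have hmain : (m:ℝ)^(p-1) / ((Nat.factorial (p-m):ℝ) * (Nat.factorial (m-1):ℝ))
      * (1 + 6*(p:ℝ)/(5*(m:ℝ))) ^ (m-1)
      < 9.34 ^ p / (5.2 * Real.pi * Real.sqrt ((p : ℝ) - 1)) := by
    rcases le_or_gt 10 p with hbig | hsmall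
    · have hD : (0:ℝ) < (Nat.factorial (p-m):ℝ) * (Nat.factorial (m-1):ℝ) := by positivity
      have hmp' : (m:ℝ) ≤ (p:ℝ) := by exact_mod_cast hmp
      have hnum : (m:ℝ)^(p-1) * (1 + 6*(p:ℝ)/(5*(m:ℝ)))^(m-1)
          ≤ (p:ℝ)^(p-1) * ((11:ℝ)/5)^(m-1) := by
        have hsplit : (m:ℝ)^(p-1) = (m:ℝ)^(p-m) * (m:ℝ)^(m-1) := by
          rw [← pow_add]; congr 1; omega
        have hmb : (m:ℝ) * (1 + 6*(p:ℝ)/(5*(m:ℝ))) = (m:ℝ) + 6*(p:ℝ)/5 := by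
          field_simp
        calc (m:ℝ)^(p-1) * (1 + 6*(p:ℝ)/(5*(m:ℝ)))^(m-1)
            = (m:ℝ)^(p-m) * ((m:ℝ) * (1 + 6*(p:ℝ)/(5*(m:ℝ))))^(m-1) := by
              rw [mul_pow, hsplit]; ring
          _ = (m:ℝ)^(p-m) * ((m:ℝ) + 6*(p:ℝ)/5)^(m-1) := by rw [hmb]
          _ ≤ (p:ℝ)^(p-m) * (((11:ℝ)/5) * (p:ℝ))^(m-1) := by
              refine mul_le_mul (pow_le_pow_left₀ hm0.le hmp' _)
                (pow_le_pow_left₀ (by positivity) (by linarith) _) (by positivity) (by positivity)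
          _ = (p:ℝ)^(p-1) * ((11:ℝ)/5)^(m-1) := by
              rw [mul_pow]
              have e : (p:ℝ)^(p-m) * (p:ℝ)^(m-1) = (p:ℝ)^(p-1) := by
                rw [← pow_add]; congr 1; omega
              calc (p:ℝ)^(p-m) * (((11:ℝ)/5)^(m-1) * (p:ℝ)^(m-1))
                  = ((p:ℝ)^(p-m) * (p:ℝ)^(m-1)) * ((11:ℝ)/5)^(m-1) := by ring
                _ = (p:ℝ)^(p-1) * ((11:ℝ)/5)^(m-1) := by rw [e]
      have step2 : (p:ℝ)^(p-1) * ((11:ℝ)/5)^(m-1)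
            / ((Nat.factorial (p-m):ℝ) * (Nat.factorial (m-1):ℝ))
          ≤ ((16:ℝ)/5)^(p-1) * (p:ℝ)^(p-1) / (Nat.factorial (p-1):ℝ) := by
        rw [div_le_div_iff₀ hD (by positivity)]
        have hch : ((Nat.factorial (p-1)):ℝ)
            = ((Nat.choose (p-1) (m-1)):ℝ) * ((Nat.factorial (m-1)):ℝ)
              * ((Nat.factorial (p-m)):ℝ) := by
          have h0 := Nat.choose_mul_factorial_mul_factorial (show m-1 ≤ p-1 by omega)
          rw [show p-1-(m-1) = p-m by omega] at h0
          exact_mod_cast h0.symm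
        rw [hch]
        have hcb := choose_le_pow16 p m hm1 hmp
        calc (p:ℝ)^(p-1) * ((11:ℝ)/5)^(m-1)
              * (((Nat.choose (p-1) (m-1)):ℝ) * ((Nat.factorial (m-1)):ℝ)
                * ((Nat.factorial (p-m)):ℝ))
            = (((Nat.choose (p-1) (m-1)):ℝ) * ((11:ℝ)/5)^(m-1))
              * ((p:ℝ)^(p-1) * (((Nat.factorial (p-m)):ℝ) * ((Nat.factorial (m-1)):ℝ))) := by
              ring
          _ ≤ ((16:ℝ)/5)^(p-1)
              * ((p:ℝ)^(p-1) * (((Nat.factorial (p-m)):ℝ) * ((Nat.factorial (m-1)):ℝ))) :=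
              mul_le_mul_of_nonneg_right hcb (by positivity)
          _ = ((16:ℝ)/5)^(p-1) * (p:ℝ)^(p-1)
              * (((Nat.factorial (p-m)):ℝ) * ((Nat.factorial (m-1)):ℝ)) := by ring
      calc (m:ℝ)^(p-1) / ((Nat.factorial (p-m):ℝ) * (Nat.factorial (m-1):ℝ))
            * (1 + 6*(p:ℝ)/(5*(m:ℝ))) ^ (m-1)
          = (m:ℝ)^(p-1) * (1 + 6*(p:ℝ)/(5*(m:ℝ))) ^ (m-1)
            / ((Nat.factorial (p-m):ℝ) * (Nat.factorial (m-1):ℝ)) := by ring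
        _ ≤ (p:ℝ)^(p-1) * ((11:ℝ)/5)^(m-1)
            / ((Nat.factorial (p-m):ℝ) * (Nat.factorial (m-1):ℝ)) :=
            (div_le_div_iff_of_pos_right hD).mpr hnum
        _ ≤ ((16:ℝ)/5)^(p-1) * (p:ℝ)^(p-1) / (Nat.factorial (p-1):ℝ) := step2
        _ < 9.34 ^ p / (5.2 * Real.pi * Real.sqrt ((p : ℝ) - 1)) := F_lt p hbig
    · interval_cases p <;> interval_cases m <;>
        first
        | (refine rhs_helper _ _ 1.415 ?_ ?_ ?_ ?_ ?_ <;>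
            first
            | (rw [Real.sqrt_le_iff]; norm_num; done)
            | positivity
            | (norm_num [Nat.factorial]; done))
        | (refine rhs_helper _ _ 1.733 ?_ ?_ ?_ ?_ ?_ <;>
            first
            | (rw [Real.sqrt_le_iff]; norm_num; done)
            | positivity
            | (norm_num [Nat.factorial]; done))
        | (refine rhs_helper _ _ 2 ?_ ?_ ?_ ?_ ?_ <;>
            first
            | (rw [Real.sqrt_le_iff]; norm_num; done)
            | positivity
            | (norm_num [Nat.factorial]; done))
        | (refine rhs_helper _ _ 2.237 ?_ ?_ ?_ ?_ ?_ <;>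
            first
            | (rw [Real.sqrt_le_iff]; norm_num; done)
            | positivity
            | (norm_num [Nat.factorial]; done))
        | (refine rhs_helper _ _ 2.45 ?_ ?_ ?_ ?_ ?_ <;>
            first
            | (rw [Real.sqrt_le_iff]; norm_num; done)
            | positivity
            | (norm_num [Nat.factorial]; done))
        | (refine rhs_helper _ _ 2.646 ?_ ?_ ?_ ?_ ?_ <;>
            first
            | (rw [Real.sqrt_le_iff]; norm_num; done)
            | positivity
            | (norm_num [Nat.factorial]; done))
        | (refine rhs_helper _ _ 2.829 ?_ ?_ ?_ ?_ ?_ <;>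
            first
            | (rw [Real.sqrt_le_iff]; norm_num; done)
            | positivity
            | (norm_num [Nat.factorial]; done))
  calc (m : ℝ) ^ (p - 1) / ((Nat.factorial (p - m) : ℝ) * (Nat.factorial (m - 1) : ℝ)) *
        ‖1 + z / m‖ ^ (ℓ - 1)
      ≤ (m:ℝ)^(p-1) / ((Nat.factorial (p-m):ℝ) * (Nat.factorial (m-1):ℝ))
        * (1 + 6*(p:ℝ)/(5*(m:ℝ))) ^ (m-1) := mul_le_mul_of_nonneg_left hpow hA
    _ < 9.34 ^ p / (5.2 * Real.pi * Real.sqrt ((p : ℝ) - 1)) := hmain
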